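/- For every finitely supported function u : I × ℤ → ℤ there exists a unique function ũ : I × ℤ → ℤ such that (i) there is N ∈ ℤ with ũ(i,s) = 0 for all i ∈ I and all s ≤ N, and (ii) for every (i,s) ∈ I × ℤ one has u(i,s) = ũ(i,s−1) + ũ(i,s+1) + ∑_{j ≠ i} (C i j)·ũ(j,s) (equivalently, u(i,s) = ũ(i,s−1) + ũ(i,s+1) − ∑_{j : C i j = −1} ũ(j,s)). -/
import Mathlib

open Finset

section Aux

variable {I : Type*} [Fintype I] [DecidableEq I]

/-- Two-step recursion producing the pair `(t (·, N+n), t (·, N+n+1))`. -/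
def utSeq (C : I → I → ℤ) (u : I × ℤ → ℤ) (N : ℤ) : ℕ → (I → ℤ) × (I → ℤ)
  | 0 => (0, 0)
  | n + 1 =>
    let p := utSeq C u N n
    (p.2, fun i => u (i, N + n + 1) - p.1 i - ∑ j ∈ Finset.univ.erase i, C i j * p.2 j)

lemma utSeq_fst_succ (C : I → I → ℤ) (u : I × ℤ → ℤ) (N : ℤ) (n : ℕ) :
    (utSeq C u N (n + 1)).1 = (utSeq C u N n).2 := rfl

lemma utSeq_snd_succ (C : I → I → ℤ) (u : I × ℤ → ℤ) (N : ℤ) (n : ℕ) (i : I) :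
    (utSeq C u N (n + 1)).2 i =
      u (i, N + n + 1) - (utSeq C u N n).1 i -
        ∑ j ∈ Finset.univ.erase i, C i j * (utSeq C u N n).2 j := rfl

/-- Uniqueness of solutions to the recurrence with vanishing initial data. -/
lemma utilde_uniq (C : I → I → ℤ) (u : I × ℤ → ℤ) (t1 t2 : I × ℤ → ℤ)
    (N1 N2 : ℤ)
    (h1z : ∀ i s, s ≤ N1 → t1 (i, s) = 0)
    (h2z : ∀ i s, s ≤ N2 → t2 (i, s) = 0)
    (h1 : ∀ i s, u (i, s) = t1 (i, s - 1) + t1 (i, s + 1) +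
          ∑ j ∈ Finset.univ.erase i, C i j * t1 (j, s))
    (h2 : ∀ i s, u (i, s) = t2 (i, s - 1) + t2 (i, s + 1) +
          ∑ j ∈ Finset.univ.erase i, C i j * t2 (j, s)) :
    t1 = t2 := by
  set M := min N1 N2 with hM
  have hz1 : ∀ i s, s ≤ M → t1 (i, s) = 0 := fun i s hs => h1z i s (le_trans hs (min_le_left _ _))
  have hz2 : ∀ i s, s ≤ M → t2 (i, s) = 0 := fun i s hs => h2z i s (le_trans hs (min_le_right _ _))
  have key : ∀ n : ℕ, ∀ m : ℕ, m ≤ n → ∀ i, t1 (i, M + m) = t2 (i, M + m) := by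
    intro n
    induction n with
    | zero =>
      intro m hm i
      have hm0 : m = 0 := by omega
      subst hm0
      rw [hz1 i (M + (0:ℕ)) (by push_cast; omega), hz2 i (M + (0:ℕ)) (by push_cast; omega)]
    | succ n ih =>
      intro m hm i
      rcases Nat.lt_or_ge m (n + 1) with h | h
      · exact ih m (by omega) i
      · have hm' : m = n + 1 := by omega
        subst hm'
        -- use the recurrence at s = M + n
        have e1 := h1 i (M + n)
        have e2 := h2 i (M + n)
        have hsum : ∑ j ∈ Finset.univ.erase i, C i j * t1 (j, M + n) =
            ∑ j ∈ Finset.univ.erase i, C i j * t2 (j, M + n) := by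
          refine Finset.sum_congr rfl fun j _ => ?_
          rw [ih n le_rfl j]
        have hprev : t1 (i, M + n - 1) = t2 (i, M + n - 1) := by
          rcases Nat.eq_zero_or_pos n with hn | hn
          · subst hn
            rw [hz1 i _ (by omega), hz2 i _ (by omega)]
          · have : (M : ℤ) + n - 1 = M + (n - 1 : ℕ) := by
              push_cast [hn]; ring
            rw [this]
            exact ih (n - 1) (by omega) i
        have hgoal : t1 (i, M + n + 1) = t2 (i, M + n + 1) := by
          have := e1.symm.trans e2
          rw [hsum, hprev] at this
          linarith
        have : (M : ℤ) + (n + 1 : ℕ) = M + n + 1 := by push_cast; ring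
        rw [this]
        exact hgoal
  funext p
  obtain ⟨i, s⟩ := p
  rcases le_or_gt s M with hs | hs
  · rw [hz1 i s hs, hz2 i s hs]
  · have hs' : s = M + ((s - M).toNat : ℤ) := by omega
    rw [hs']
    exact key _ _ le_rfl i

end Aux

/-- For every finitely supported `u : I × ℤ → ℤ` there is a unique
`ũ : I × ℤ → ℤ` vanishing for all sufficiently small second arguments and
satisfying `u (i,s) = ũ (i,s-1) + ũ (i,s+1) + ∑_{j ≠ i} (C i j) ũ (j,s)`
for all `(i,s)`. -/
theorem utilde_existsUnique {I : Type*} [Fintype I] [DecidableEq I]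
    (C : I → I → ℤ)
    (hsym : ∀ i j, C i j = C j i)
    (hdiag : ∀ i, C i i = 2)
    (hoff : ∀ i j, i ≠ j → C i j = 0 ∨ C i j = -1)
    (u : (I × ℤ) →₀ ℤ) :
    ∃! t : I × ℤ → ℤ,
      (∃ N : ℤ, ∀ i : I, ∀ s : ℤ, s ≤ N → t (i, s) = 0) ∧
      (∀ i : I, ∀ s : ℤ,
        u (i, s) = t (i, s - 1) + t (i, s + 1) +
          ∑ j ∈ Finset.univ.erase i, C i j * t (j, s)) := by
  classical
  -- choose N below the support of u
  obtain ⟨N, hN⟩ : ∃ N : ℤ, ∀ i : I, ∀ s : ℤ, s ≤ N → u (i, s) = 0 := by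
    set F : Finset ℤ := insert 0 (u.support.image Prod.snd) with hF
    refine ⟨F.min' ⟨0, by simp [hF]⟩ - 1, fun i s hs => ?_⟩
    by_contra h
    have hmem : (i, s) ∈ u.support := Finsupp.mem_support_iff.mpr h
    have : s ∈ F := by
      simp only [hF, Finset.mem_insert, Finset.mem_image]
      exact Or.inr ⟨(i, s), hmem, rfl⟩
    have := Finset.min'_le F s this
    omega
  set T : ℕ → (I → ℤ) × (I → ℤ) := utSeq C (fun p => u p) N with hT
  set t : I × ℤ → ℤ := fun p => (T (p.2 - N).toNat).1 p.1 with ht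
  have tzero : ∀ i : I, ∀ s : ℤ, s ≤ N → t (i, s) = 0 := by
    intro i s hs
    have : (s - N).toNat = 0 := by omega
    simp only [ht, this]
    rfl
  have trec : ∀ i : I, ∀ s : ℤ,
      u (i, s) = t (i, s - 1) + t (i, s + 1) +
        ∑ j ∈ Finset.univ.erase i, C i j * t (j, s) := by
    intro i s
    rcases lt_or_ge s N with hs | hs
    · -- everything vanishes
      have h1 : (s - 1 - N).toNat = 0 := by omega
      have h2 : (s + 1 - N).toNat = 0 := by omega
      have h3 : (s - N).toNat = 0 := by omega
      have hu : u (i, s) = 0 := hN i s (by omega)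
      simp only [ht, h1, h2, h3, hu]
      simp [hT, utSeq]
    · set n : ℕ := (s - N).toNat with hn
      have hsn : s = N + n := by omega
      rcases Nat.eq_zero_or_pos n with h0 | hpos
      · -- s = N
        have hsN : s = N := by omega
        have h1 : (s - 1 - N).toNat = 0 := by omega
        have h2 : (s + 1 - N).toNat = 1 := by omega
        have h3 : (s - N).toNat = 0 := by omega
        have hu : u (i, s) = 0 := hN i s (le_of_eq hsN)
        simp only [ht, h1, h2, h3, hu]
        simp [hT, utSeq]
      · obtain ⟨m, hm⟩ : ∃ m : ℕ, n = m + 1 := ⟨n - 1, by omega⟩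
        have hs1 : (s - 1 - N).toNat = m := by omega
        have hs2 : (s + 1 - N).toNat = m + 2 := by omega
        have hs3 : (s - N).toNat = m + 1 := by omega
        have hus : u (i, s) = u (i, N + (m : ℤ) + 1) := by
          congr 1
          have : s = N + (m : ℤ) + 1 := by omega
          rw [this]
        simp only [ht, hs1, hs2, hs3]
        rw [hus]
        rw [show (T (m + 2)).1 = (T (m + 1)).2 from rfl]
        rw [show (T (m + 1)).1 = (T m).2 from rfl]
        have hsnd : (T (m + 1)).2 i =
            u (i, N + m + 1) - (T m).1 i -
              ∑ j ∈ Finset.univ.erase i, C i j * (T m).2 j := rfl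
        rw [hsnd]
        ring
  refine ⟨t, ⟨⟨N, tzero⟩, trec⟩, ?_⟩
  rintro t' ⟨⟨N', ht'z⟩, ht'rec⟩
  exact utilde_uniq C (fun p => u p) t' t N' N ht'z tzero ht'rec trec
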